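/- Let P = (E, ρ) be a (q,m)-demi-polymatroid and let ρ*(X) = ρ(X^⊥) + m·dim X − ρ(E). Then the pair (E, ρ*) is also a (q,m)-demi-polymatroid, and moreover (ρ*)* = ρ. -/

import Mathlib

set_option linter.unusedSectionVars false

open Module Matrix

variable {F : Type*} [Field F] [Fintype F] {n : ℕ}

/-- The orthogonal complement of a subspace of `𝔽_q^n` with respect to the standard dot product. -/
def perp (X : Submodule F (Fin n → F)) : Submodule F (Fin n → F) where
  carrier := {x | ∀ y ∈ X, dotProduct x y = 0}
  add_mem' := fun {a b} ha hb y hy => by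
    rw [Set.mem_setOf_eq] at *
    rw [add_dotProduct, ha y hy, hb y hy, add_zero]
  zero_mem' := fun y hy => zero_dotProduct y
  smul_mem' := fun c a ha y hy => by
    rw [Set.mem_setOf_eq] at *
    rw [smul_dotProduct, ha y hy, smul_zero]

/-- The dual rank function `ρ*(X) = ρ(X^⊥) + m·dim X − ρ(E)`. -/
noncomputable def dualRho (m : ℕ) (rho : Submodule F (Fin n → F) → ℤ) (X : Submodule F (Fin n → F)) : ℤ :=
  rho (perp X) + (m : ℤ) * (finrank F X : ℤ) - rho ⊤

/-- The nullity function `ν(X) = m·dim X − ρ(X)`. -/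
noncomputable def nullity (m : ℕ) (rho : Submodule F (Fin n → F) → ℤ) (X : Submodule F (Fin n → F)) : ℤ :=
  (m : ℤ) * (finrank F X : ℤ) - rho X

/-- The conullity function `ν*(X) = ρ(E) − ρ(X^⊥)`. -/
def coNull (rho : Submodule F (Fin n → F) → ℤ) (X : Submodule F (Fin n → F)) : ℤ :=
  rho ⊤ - rho (perp X)

/-- The `r`-th generalized weight `d_r = min{dim X : ν*(X) ≥ r}`. -/
noncomputable def genW (rho : Submodule F (Fin n → F) → ℤ) (r : ℤ) : ℕ :=
  sInf {d : ℕ | ∃ X : Submodule F (Fin n → F), finrank F X = d ∧ r ≤ coNull rho X}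

/-- `h(x) = max{ν(X) : dim X = x}`. -/
noncomputable def hFun (m : ℕ) (rho : Submodule F (Fin n → F) → ℤ) (x : ℕ) : ℤ :=
  sSup {v : ℤ | ∃ X : Submodule F (Fin n → F), finrank F X = x ∧ v = nullity m rho X}

/-- `h*(x) = max{ν*(X) : dim X = x}`. -/
noncomputable def hStar (rho : Submodule F (Fin n → F) → ℤ) (x : ℕ) : ℤ :=
  sSup {v : ℤ | ∃ X : Submodule F (Fin n → F), finrank F X = x ∧ v = coNull rho X}

/-- A `(q,m)`-polymatroid on `E = 𝔽_q^n`. -/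
structure QMPolymatroid (F : Type*) [Field F] [Fintype F] (n m : ℕ) where
  rho : Submodule F (Fin n → F) → ℤ
  rho_nonneg : ∀ X, 0 ≤ rho X
  rho_le : ∀ X, rho X ≤ (m : ℤ) * (finrank F X : ℤ)
  rho_mono : ∀ ⦃X Y⦄, X ≤ Y → rho X ≤ rho Y
  rho_submodular : ∀ X Y, rho (X ⊔ Y) + rho (X ⊓ Y) ≤ rho X + rho Y

/-- A `(q,m)`-demi-polymatroid on `E = 𝔽_q^n`. -/
structure QMDemiPolymatroid (F : Type*) [Field F] [Fintype F] (n m : ℕ) where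
  rho : Submodule F (Fin n → F) → ℤ
  rho_nonneg : ∀ X, 0 ≤ rho X
  rho_le : ∀ X, rho X ≤ (m : ℤ) * (finrank F X : ℤ)
  rho_mono : ∀ ⦃X Y⦄, X ≤ Y → rho X ≤ rho Y
  dual_nonneg : ∀ X, 0 ≤ dualRho m rho X
  dual_le : ∀ X, dualRho m rho X ≤ (m : ℤ) * (finrank F X : ℤ)
  dual_mono : ∀ ⦃X Y⦄, X ≤ Y → dualRho m rho X ≤ dualRho m rho Y

section Codes

variable {m : ℕ}

/-- The row space of a matrix. -/
def rowSpace (A : Matrix (Fin m) (Fin n) F) : Submodule F (Fin n → F) :=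
  Submodule.span F (Set.range A)

theorem rowSpace_le_iff (A : Matrix (Fin m) (Fin n) F) (X : Submodule F (Fin n → F)) :
    rowSpace A ≤ X ↔ ∀ i, A i ∈ X := by
  rw [rowSpace, Submodule.span_le]; exact Set.range_subset_iff

/-- Matrices whose row space is contained in `X`. -/
def supportedOn (m : ℕ) (X : Submodule F (Fin n → F)) :
    Submodule F (Matrix (Fin m) (Fin n) F) where
  carrier := {A | rowSpace A ≤ X}
  add_mem' := fun {A B} hA hB => by
    rw [Set.mem_setOf_eq, rowSpace_le_iff] at *
    exact fun i => X.add_mem (hA i) (hB i)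
  zero_mem' := by
    rw [Set.mem_setOf_eq, rowSpace_le_iff]
    exact fun i => X.zero_mem
  smul_mem' := fun c A hA => by
    rw [Set.mem_setOf_eq, rowSpace_le_iff] at *
    exact fun i => X.smul_mem c (hA i)

/-- `C(X)`: the subspace of a Delsarte code `C` of matrices whose row space lies in `X`. -/
def subcode (C : Submodule F (Matrix (Fin m) (Fin n) F)) (X : Submodule F (Fin n → F)) :
    Submodule F (Matrix (Fin m) (Fin n) F) :=
  C ⊓ supportedOn m X

/-- The rank function `ρ_C(X) = dim C − dim C(X^⊥)` of a Delsarte code. -/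
noncomputable def rhoC (C : Submodule F (Matrix (Fin m) (Fin n) F))
    (X : Submodule F (Fin n → F)) : ℤ :=
  (finrank F C : ℤ) - (finrank F (subcode C (perp X)) : ℤ)

/-- The generalized weight `d_r(C) = min{dim X : dim C(X) ≥ r}` of a Delsarte code. -/
noncomputable def codeWeight (C : Submodule F (Matrix (Fin m) (Fin n) F)) (r : ℤ) : ℕ :=
  sInf {d : ℕ | ∃ X : Submodule F (Fin n → F),
    finrank F X = d ∧ r ≤ (finrank F (subcode C X) : ℤ)}

/-- The trace dual of a Delsarte code. -/
def traceDual (C : Submodule F (Matrix (Fin m) (Fin n) F)) :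
    Submodule F (Matrix (Fin m) (Fin n) F) where
  carrier := {N | ∀ M ∈ C, Matrix.trace (M * Nᵀ) = 0}
  add_mem' := fun {N₁ N₂} h1 h2 M hM => by
    rw [Matrix.transpose_add, Matrix.mul_add, Matrix.trace_add, h1 M hM, h2 M hM, add_zero]
  zero_mem' := fun M hM => by simp
  smul_mem' := fun c N hN M hM => by
    rw [Matrix.transpose_smul, Matrix.mul_smul, Matrix.trace_smul, hN M hM, smul_zero]

/-- The transposed code `Cᵀ = {Mᵗ : M ∈ C}` of a code of square matrices. -/
def transposeCode (C : Submodule F (Matrix (Fin n) (Fin n) F)) :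
    Submodule F (Matrix (Fin n) (Fin n) F) where
  carrier := {A | Aᵀ ∈ C}
  add_mem' := fun {A B} hA hB => by
    rw [Set.mem_setOf_eq, Matrix.transpose_add]; exact C.add_mem hA hB
  zero_mem' := by
    rw [Set.mem_setOf_eq, Matrix.transpose_zero]; exact C.zero_mem
  smul_mem' := fun c A hA => by
    rw [Set.mem_setOf_eq, Matrix.transpose_smul]; exact C.smul_mem c hA

/-- The maximum rank of a matrix in a subspace of matrices. -/
noncomputable def maxrank (A : Submodule F (Matrix (Fin m) (Fin n) F)) : ℕ :=
  sSup {r : ℕ | ∃ M ∈ A, M.rank = r}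

/-- An optimal anticode: a subspace `𝒜` of `𝕄` with `dim 𝒜 = m · maxrank 𝒜`. -/
def IsOptimalAnticode (A : Submodule F (Matrix (Fin m) (Fin n) F)) : Prop :=
  finrank F A = m * maxrank A

/-- Ravagnani's generalized weight `a_r(C)`. -/
noncomputable def aWeight (C : Submodule F (Matrix (Fin m) (Fin n) F)) (r : ℤ) : ℕ :=
  (sInf {d : ℕ | ∃ A : Submodule F (Matrix (Fin m) (Fin n) F),
    IsOptimalAnticode A ∧ finrank F A = d ∧ r ≤ (finrank F (A ⊓ C : Submodule F _) : ℤ)}) / m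

end Codes


section AuxDual

variable {F : Type*} [Field F] [Fintype F] {n : ℕ}

lemma toDual_eq_dot (x y : Fin n → F) :
    (Pi.basisFun F (Fin n)).toDual x y = dotProduct x y := by
  conv_lhs => rw [← (Pi.basisFun F (Fin n)).sum_repr y]
  rw [map_sum, dotProduct]
  refine Finset.sum_congr rfl fun i _ => ?_
  rw [_root_.map_smul, Basis.toDual_apply_left]
  simp [mul_comm]

lemma perp_eq_comap (X : Submodule F (Fin n → F)) :
    perp X = X.dualAnnihilator.comap
      ((Pi.basisFun F (Fin n)).toDualEquiv : (Fin n → F) →ₗ[F] Module.Dual F (Fin n → F)) := by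
  ext x
  simp only [Submodule.mem_comap, Submodule.mem_dualAnnihilator, LinearEquiv.coe_coe,
    Basis.toDualEquiv_apply, toDual_eq_dot]
  rfl

lemma finrank_perp_add (X : Submodule F (Fin n → F)) :
    finrank F (perp X) + finrank F X = n := by
  rw [perp_eq_comap, Submodule.comap_equiv_eq_map_symm]
  rw [LinearEquiv.finrank_map_eq]
  have h1 : finrank F X.dualAnnihilator = finrank F ((Fin n → F) ⧸ X) :=
    ((Subspace.quotEquivAnnihilator X).finrank_eq).symm
  rw [h1, Submodule.finrank_quotient_add_finrank, Module.finrank_fin_fun]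

lemma perp_perp (X : Submodule F (Fin n → F)) : perp (perp X) = X := by
  have hle : X ≤ perp (perp X) := fun x hx y hy => by
    rw [dotProduct_comm]; exact hy x hx
  refine (Submodule.eq_of_le_of_finrank_le hle ?_).symm
  have h1 := finrank_perp_add (F := F) X
  have h2 := finrank_perp_add (F := F) (perp X)
  omega

lemma perp_top : perp (⊤ : Submodule F (Fin n → F)) = ⊥ := by
  ext x
  simp only [Submodule.mem_bot]
  constructor
  · intro hx
    funext i
    have := hx (Pi.single i 1) trivial
    rwa [dotProduct_single, mul_one] at this
  · rintro rfl y _; exact zero_dotProduct y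

lemma demi_rho_bot {m : ℕ} (P : QMDemiPolymatroid F n m) : P.rho ⊥ = 0 :=
  le_antisymm (by simpa using P.rho_le ⊥) (P.rho_nonneg ⊥)

lemma dualRho_dualRho {m : ℕ} (P : QMDemiPolymatroid F n m) (X : Submodule F (Fin n → F)) :
    dualRho m (dualRho m P.rho) X = P.rho X := by
  unfold dualRho
  rw [perp_perp, perp_top, demi_rho_bot]
  have hc : (finrank F (perp X) : ℤ) + (finrank F X : ℤ) = (n : ℤ) := by
    exact_mod_cast finrank_perp_add (F := F) X
  have hT : (finrank F (⊤ : Submodule F (Fin n → F)) : ℤ) = (n : ℤ) := by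
    rw [finrank_top, Module.finrank_fin_fun]
  rw [hT]
  have h2 : (m : ℤ) * (finrank F (perp X) : ℤ) + (m : ℤ) * (finrank F X : ℤ)
      = (m : ℤ) * (n : ℤ) := by rw [← mul_add, hc]
  linarith

end AuxDual

/-- the dual of a `(q,m)`-demi-polymatroid is a `(q,m)`-demi-polymatroid,
and `(ρ*)* = ρ`. -/
theorem demi_dual_is_demi {F : Type*} [Field F] [Fintype F] {n m : ℕ}
    (P : QMDemiPolymatroid F n m) :
    (∃ D : QMDemiPolymatroid F n m, D.rho = dualRho m P.rho) ∧
    (∀ X : Submodule F (Fin n → F), dualRho m (dualRho m P.rho) X = P.rho X) := by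
  have key := dualRho_dualRho P
  refine ⟨⟨{ rho := dualRho m P.rho
             rho_nonneg := P.dual_nonneg
             rho_le := P.dual_le
             rho_mono := P.dual_mono
             dual_nonneg := fun X => by
               rw [key]; exact P.rho_nonneg X
             dual_le := fun X => by
               rw [key]; exact P.rho_le X
             dual_mono := fun X Y h => by
               rw [key, key]; exact P.rho_mono h }, rfl⟩, key⟩
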